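/- Let χ : ℝ^× → ℂ be a continuous group homomorphism with |χ(t)| = 1 for all t ≠ 0, let s ∈ ℂ, and let N ∈ ℕ. Then there exist a constant C > 0 and a finite family of Schwartz seminorms on 𝓢(ℝ²) with maximum S* such that for every Φ ∈ 𝓢(ℝ²) and every y ∈ ℝ with |y| ≥ 1, the integral I(y) = ∫_{ℝ∖{0}} Φ(t, y/t) χ(t) |t|^{2s} dt/|t| converges absolutely and satisfies |I(y)| ≤ C · S*(Φ) · |y|^{-N}. -/

import Mathlib

open MeasureTheory

/-- Rapid decay, as `|y| → ∞`, of `∫_{ℝ^×} Φ(t, y/t) χ(t) |t|^{2s} dt/|t|` for a Schwartz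
function `Φ` on `ℝ²` and a unitary character `χ` of `ℝ^×`, with constants controlled by
finitely many Schwartz seminorms of `Φ`. -/
theorem stmt_5 (χ : ℝ → ℂ)
    (hχmul : ∀ t u : ℝ, t ≠ 0 → u ≠ 0 → χ (t * u) = χ t * χ u)
    (hχcont : ContinuousOn χ {t : ℝ | t ≠ 0})
    (hχunit : ∀ t : ℝ, t ≠ 0 → ‖χ t‖ = 1)
    (s : ℂ) (N : ℕ) :
    ∃ (C : ℝ) (F : Finset (ℕ × ℕ)), 0 < C ∧
      ∀ (Φ : SchwartzMap (ℝ × ℝ) ℂ) (y : ℝ), 1 ≤ |y| →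
        IntegrableOn
          (fun t : ℝ => Φ (t, y / t) * χ t * ((|t| : ℝ) : ℂ) ^ (2 * s) / ((|t| : ℝ) : ℂ))
          {(0:ℝ)}ᶜ ∧
        ‖∫ t in {(0:ℝ)}ᶜ,
            Φ (t, y / t) * χ t * ((|t| : ℝ) : ℂ) ^ (2 * s) / ((|t| : ℝ) : ℂ)‖
          ≤ C * ((F.sup fun kn => SchwartzMap.seminorm ℝ kn.1 kn.2) Φ) * |y| ^ (-(N : ℝ)) := by
  set σ : ℝ := (2*s).re with hσ
  set b : ℕ := N + ⌈|σ|⌉₊ + 1 with hb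
  set c : ℕ := ⌈(b:ℝ) + σ - 1⌉₊ with hc
  set a : ℕ := c + 2 with ha
  set k : ℕ := a + b with hk
  have hbσ : 0 ≤ σ - 1 + (b:ℝ) := by
    have h1 : |σ| ≤ (⌈|σ|⌉₊ : ℝ) := Nat.le_ceil _
    have h2 : -σ ≤ |σ| := neg_le_abs σ
    rw [hb]; push_cast; linarith
  have hcb : σ - 1 + (b:ℝ) ≤ (c:ℝ) := by
    have := Nat.le_ceil ((b:ℝ) + σ - 1)
    rw [hc]; linarith
  have hNb : (N:ℝ) ≤ (b:ℝ) := by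
    rw [hb]; push_cast; linarith [Nat.cast_nonneg (α := ℝ) ⌈|σ|⌉₊]
  have hInt : Integrable (fun t : ℝ => (1 + ‖t‖) ^ (-(2:ℝ))) :=
    integrable_one_add_norm (by simp)
  set I : ℝ := ∫ t : ℝ, (1 + ‖t‖) ^ (-(2:ℝ)) with hI
  have hI0 : 0 ≤ I := integral_nonneg fun t => by positivity
  refine ⟨2^k * (I + 1), Finset.Iic (k, 0), by positivity, ?_⟩
  intro Φ y hy
  set S : ℝ := ((Finset.Iic (k,0)).sup fun kn => SchwartzMap.seminorm ℝ kn.1 kn.2) Φ with hSdef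
  have hS0 : 0 ≤ S := apply_nonneg _ _
  have hy0 : (0:ℝ) < |y| := lt_of_lt_of_le one_pos hy
  set f : ℝ → ℂ := fun t : ℝ => Φ (t, y / t) * χ t * ((|t| : ℝ) : ℂ) ^ (2 * s) / ((|t| : ℝ) : ℂ)
    with hf
  set g : ℝ → ℝ := fun t : ℝ => 2^k * S * |y| ^ (-(N:ℝ)) * (1 + ‖t‖) ^ (-(2:ℝ)) with hg
  have key : ∀ t : ℝ, t ≠ 0 → ‖f t‖ ≤ g t := by
    intro t ht
    have ht0 : (0:ℝ) < |t| := abs_pos.mpr ht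
    set x : ℝ × ℝ := (t, y/t) with hx
    have hnorm : ‖f t‖ = ‖Φ x‖ * (|t| ^ σ / |t|) := by
      rw [hf]
      simp only [norm_div, norm_mul]
      rw [hχunit t ht,
        Complex.norm_cpow_eq_rpow_re_of_pos ht0,
        Complex.norm_real, Real.norm_eq_abs, abs_abs]
      rw [← hσ]; ring
    have hxn1 : 1 + |t| ≤ 1 + ‖x‖ := by
      have h := norm_fst_le x
      rw [hx] at h
      simp only [Real.norm_eq_abs] at h
      linarith
    have hxn2 : |y| / |t| ≤ 1 + ‖x‖ := by
      have h := norm_snd_le x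
      rw [hx] at h
      simp only [Real.norm_eq_abs, abs_div] at h
      linarith [norm_nonneg x]
    have hxpos : (0:ℝ) < 1 + ‖x‖ := by positivity
    have h1 : (1 + ‖x‖) ^ k * ‖Φ x‖ ≤ 2 ^ k * S := by
      simpa using SchwartzMap.one_add_le_sup_seminorm_apply (𝕜 := ℝ) (m := (k,0))
        le_rfl le_rfl Φ x
    have hA : |t| ^ (σ - 1 + (b:ℝ)) ≤ (1+|t|) ^ (c:ℝ) := by
      calc |t| ^ (σ - 1 + (b:ℝ)) ≤ (1+|t|) ^ (σ - 1 + (b:ℝ)) :=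
            Real.rpow_le_rpow (abs_nonneg t) (by linarith) hbσ
        _ ≤ (1+|t|) ^ (c:ℝ) :=
            Real.rpow_le_rpow_of_exponent_le (by linarith) hcb
    have hB : |y| ^ (N:ℝ) ≤ |y| ^ (b:ℝ) := Real.rpow_le_rpow_of_exponent_le hy hNb
    have main : |t| ^ σ / |t| * (|y| ^ (N:ℝ) * (1+|t|) ^ (2:ℝ)) ≤ (1+‖x‖) ^ (k:ℝ) := by
      have e1 : |t| ^ σ / |t| = |t| ^ (σ - 1) := (Real.rpow_sub_one (ne_of_gt ht0) σ).symm
      rw [e1]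
      calc |t| ^ (σ-1) * (|y| ^ (N:ℝ) * (1+|t|) ^ (2:ℝ))
          = (|t| ^ (σ - 1 + (b:ℝ)) * |y| ^ (N:ℝ) * (1+|t|) ^ (2:ℝ)) / |t| ^ (b:ℝ) := by
            rw [Real.rpow_add ht0]
            field_simp
        _ ≤ ((1+|t|) ^ (c:ℝ) * |y| ^ (b:ℝ) * (1+|t|) ^ (2:ℝ)) / |t| ^ (b:ℝ) := by
            gcongr
        _ = (1+|t|) ^ (a:ℝ) * (|y|/|t|) ^ (b:ℝ) := by
            rw [Real.div_rpow (abs_nonneg y) (abs_nonneg t),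
              show ((a:ℝ)) = (c:ℝ) + 2 from by rw [ha]; push_cast; ring,
              Real.rpow_add (show (0:ℝ) < 1+|t| by linarith)]
            ring
        _ ≤ (1+‖x‖) ^ (a:ℝ) * (1+‖x‖) ^ (b:ℝ) := by
            gcongr <;> positivity
        _ = (1+‖x‖) ^ (k:ℝ) := by
            rw [← Real.rpow_add hxpos, hk]; push_cast; ring_nf
    rw [hnorm, hg]
    show ‖Φ x‖ * (|t| ^ σ / |t|) ≤ 2 ^ k * S * |y| ^ (-(N:ℝ)) * (1 + ‖t‖) ^ (-(2:ℝ))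
    have hQ : (0:ℝ) < |y| ^ (N:ℝ) * (1+|t|) ^ (2:ℝ) := by positivity
    have hst : 2^k * S * |y| ^ (-(N:ℝ)) * (1 + ‖t‖) ^ (-(2:ℝ))
        = (2^k * S) / (|y| ^ (N:ℝ) * (1+|t|) ^ (2:ℝ)) := by
      rw [Real.norm_eq_abs, Real.rpow_neg (abs_nonneg y), Real.rpow_neg (by positivity : (0:ℝ) ≤ 1+|t|)]
      ring
    rw [hst, le_div_iff₀ hQ]
    calc ‖Φ x‖ * (|t| ^ σ / |t|) * (|y| ^ (N:ℝ) * (1+|t|) ^ (2:ℝ))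
        = ‖Φ x‖ * (|t| ^ σ / |t| * (|y| ^ (N:ℝ) * (1+|t|) ^ (2:ℝ))) := by ring
      _ ≤ ‖Φ x‖ * (1+‖x‖) ^ (k:ℝ) := by
          gcongr

      _ = (1+‖x‖) ^ k * ‖Φ x‖ := by rw [Real.rpow_natCast]; ring
      _ ≤ 2 ^ k * S := h1
  have hgint : Integrable g := by
    rw [hg]; exact hInt.const_mul _
  have hmeasset : MeasurableSet ({(0:ℝ)}ᶜ) := (isOpen_compl_singleton).measurableSet
  have hcont : ContinuousOn f ({(0:ℝ)}ᶜ) := by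
    have h1 : ContinuousOn (fun t : ℝ => (t, y/t)) {(0:ℝ)}ᶜ :=
      continuousOn_id.prodMk (continuousOn_const.div continuousOn_id (fun t ht => ht))
    have h2 : ContinuousOn (fun t : ℝ => (Φ (t, y/t) : ℂ)) {(0:ℝ)}ᶜ :=
      Φ.continuous.comp_continuousOn h1
    have h3 : ContinuousOn χ ({(0:ℝ)}ᶜ) := hχcont
    have h4 : ContinuousOn (fun t : ℝ => ((|t|:ℝ):ℂ) ^ (2*s)) {(0:ℝ)}ᶜ := by
      intro t ht
      have ht' : t ≠ 0 := ht
      refine ContinuousAt.continuousWithinAt ?_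
      refine ContinuousAt.cpow ?_ continuousAt_const ?_
      · exact (Complex.continuous_ofReal.comp continuous_abs).continuousAt
      · exact Complex.ofReal_mem_slitPlane.2 (abs_pos.mpr ht')
    have h5 : ContinuousOn (fun t : ℝ => ((|t|:ℝ):ℂ)) {(0:ℝ)}ᶜ :=
      (Complex.continuous_ofReal.comp continuous_abs).continuousOn
    exact ((h2.mul h3).mul h4).div h5 (fun t ht => by
      simpa using abs_ne_zero.mpr (show t ≠ 0 from ht))
  have hmeas : AEStronglyMeasurable f (volume.restrict {(0:ℝ)}ᶜ) :=
    hcont.aestronglyMeasurable hmeasset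
  have haebound : ∀ᵐ t ∂(volume.restrict {(0:ℝ)}ᶜ), ‖f t‖ ≤ g t :=
    (ae_restrict_iff' hmeasset).2 (Filter.Eventually.of_forall (fun t ht => key t ht))
  have hfint : IntegrableOn f ({(0:ℝ)}ᶜ) :=
    Integrable.mono' hgint.integrableOn hmeas haebound
  refine ⟨hfint, ?_⟩
  calc ‖∫ t in {(0:ℝ)}ᶜ, f t‖ ≤ ∫ t in {(0:ℝ)}ᶜ, g t :=
        norm_integral_le_of_norm_le hgint.integrableOn haebound
    _ = ∫ t, g t := by rw [MeasureTheory.restrict_compl_singleton]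
    _ = 2^k * S * |y| ^ (-(N:ℝ)) * I := by
        rw [hg, hI]; exact integral_const_mul _ _
    _ ≤ 2^k * (I + 1) * S * |y| ^ (-(N:ℝ)) := by
        have hyN : (0:ℝ) ≤ |y| ^ (-(N:ℝ)) := Real.rpow_nonneg (abs_nonneg y) _
        have h2k : (0:ℝ) < 2^k := by positivity
        nlinarith [mul_nonneg (mul_nonneg (le_of_lt h2k) hS0) hyN]
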